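/- Suppose gcd(N, p) = 1 and let d be a positive divisor of N with gcd(d, N/d) = 1. Then U_d ∩ S₀(n,N)^± and the set of integer matrices in U_d have the same image under reduction modulo p; that is, for every integer matrix u ∈ U_d there exists u′ ∈ U_d ∩ S₀(n,N)^± with u′ ≡ u (mod p). -/

import Mathlib

open Matrix

/-- `g_x` over `ℤ`: the identity matrix with its `(1,2)` entry replaced by `x`. -/
def gmatZ (n : ℕ) (x : ℤ) : Matrix (Fin (n + 2)) (Fin (n + 2)) ℤ :=
  1 + x • Matrix.single 0 1 1

/-- Conjugation `g_d s g_d⁻¹` (note `g_d⁻¹ = g_{-d}`). -/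
def conjd (n : ℕ) (d : ℤ) (s : Matrix (Fin (n + 2)) (Fin (n + 2)) ℤ) :
    Matrix (Fin (n + 2)) (Fin (n + 2)) ℤ :=
  gmatZ n d * s * gmatZ n (-d)

/-- `S₀(m+1,N)^±`: integer matrices with nonzero determinant relatively prime to `pN`
whose first row is `≡ (∗,0,…,0) (mod N)`. -/
def S0pm (p N : ℕ) {m : ℕ} : Set (Matrix (Fin (m + 1)) (Fin (m + 1)) ℤ) :=
  {s | s.det ≠ 0 ∧ Int.gcd s.det (p * N) = 1 ∧ ∀ j : Fin (m + 1), j ≠ 0 → (N : ℤ) ∣ s 0 j}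

/-- `ψ_d¹(s)`: the `(1,1)` entry of `g_d s g_d⁻¹`. -/
def psi1 (n : ℕ) (d : ℤ) (s : Matrix (Fin (n + 2)) (Fin (n + 2)) ℤ) : ℤ :=
  conjd n d s 0 0

/-- `ψ_d²(s)`: the lower-right `(n-1)×(n-1)` block of `g_d s g_d⁻¹`. -/
def psi2 (n : ℕ) (d : ℤ) (s : Matrix (Fin (n + 2)) (Fin (n + 2)) ℤ) :
    Matrix (Fin (n + 1)) (Fin (n + 1)) ℤ :=
  Matrix.of fun i j => conjd n d s i.succ j.succ

/-- `U_d = g_d⁻¹ U₀ g_d` (integral points): `g_d u g_d⁻¹` agrees with the identity matrix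
except in the first column below the `(1,1)` entry. -/
def memUd (n : ℕ) (d : ℤ) (u : Matrix (Fin (n + 2)) (Fin (n + 2)) ℤ) : Prop :=
  ∀ i j : Fin (n + 2), ¬(j = 0 ∧ i ≠ 0) →
    conjd n d u i j = (1 : Matrix (Fin (n + 2)) (Fin (n + 2)) ℤ) i j

lemma gmatZ_mul (n : ℕ) (x y : ℤ) : gmatZ n x * gmatZ n y = gmatZ n (x + y) := by
  have h : (single 0 1 (1:ℤ) : Matrix (Fin (n+2)) (Fin (n+2)) ℤ)
      * single 0 1 1 = 0 :=
    single_mul_single_of_ne 1 0 1 0 one_ne_zero 1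
  unfold gmatZ
  simp only [add_mul, mul_add, one_mul, mul_one, Matrix.smul_mul, Matrix.mul_smul, h, smul_zero]
  module

lemma gmatZ_zero (n : ℕ) : gmatZ n 0 = 1 := by simp [gmatZ]

lemma gmatZ_mul_neg (n : ℕ) (x : ℤ) : gmatZ n x * gmatZ n (-x) = 1 := by
  rw [gmatZ_mul, add_neg_cancel, gmatZ_zero]

lemma gmatZ_neg_mul (n : ℕ) (x : ℤ) : gmatZ n (-x) * gmatZ n x = 1 := by
  rw [gmatZ_mul, neg_add_cancel, gmatZ_zero]

lemma conjd_inv (n : ℕ) (d : ℤ) (A : Matrix (Fin (n + 2)) (Fin (n + 2)) ℤ) :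
    conjd n d (gmatZ n (-d) * (A * gmatZ n d)) = A := by
  unfold conjd
  rw [← mul_assoc, ← mul_assoc, gmatZ_mul_neg, one_mul, mul_assoc, gmatZ_mul_neg, mul_one]

lemma inv_conjd (n : ℕ) (d : ℤ) (A : Matrix (Fin (n + 2)) (Fin (n + 2)) ℤ) :
    gmatZ n (-d) * (conjd n d A * gmatZ n d) = A := by
  unfold conjd
  rw [mul_assoc (gmatZ n d * A), gmatZ_neg_mul, mul_one, ← mul_assoc, gmatZ_neg_mul, one_mul]

/-- if `gcd(N,p) = 1` then `U_d ∩ S₀(n,N)^±` and the integer matrices of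
`U_d` have the same image modulo `p`: every integral `u ∈ U_d` is congruent mod `p` to
some `u' ∈ U_d ∩ S₀(n,N)^±`. -/
theorem stmt18 (p : ℕ) (hp : p.Prime) (n N d : ℕ) (hN : 0 < N) (hNp : Nat.gcd N p = 1)
    (hd : 0 < d) (hdvd : d ∣ N) (hgcd : Nat.gcd d (N / d) = 1)
    (u : Matrix (Fin (n + 2)) (Fin (n + 2)) ℤ) (hu : memUd n (d : ℤ) u) :
    ∃ u' : Matrix (Fin (n + 2)) (Fin (n + 2)) ℤ,
      memUd n (d : ℤ) u' ∧ u' ∈ S0pm p N ∧ ∀ i j, (p : ℤ) ∣ (u' i j - u i j) := by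
  set M : ℕ := N / d with hM
  set v : Matrix (Fin (n + 2)) (Fin (n + 2)) ℤ := conjd n (d : ℤ) u with hv
  -- choose t ≡ 0 mod p with M ∣ v 1 0 + t
  have hcop : IsCoprime (M : ℤ) (p : ℤ) := by
    have hMN : M ∣ N := Nat.div_dvd_of_dvd hdvd
    have : Nat.Coprime M p := Nat.Coprime.coprime_dvd_left hMN hNp
    exact Nat.isCoprime_iff_coprime.mpr this
  obtain ⟨a, b, hab⟩ := hcop
  set t : ℤ := -(v 1 0) * b * (p : ℤ) with ht
  have hpt : (p : ℤ) ∣ t := ⟨-(v 1 0) * b, by ring⟩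
  have hMt : (M : ℤ) ∣ v 1 0 + t := by
    refine ⟨v 1 0 * a, ?_⟩
    have h1 : v 1 0 * (a * M + b * p) = v 1 0 := by rw [hab, mul_one]
    nlinarith [h1]
  set F : Matrix (Fin (n + 2)) (Fin (n + 2)) ℤ := single 1 0 t with hF
  set v' : Matrix (Fin (n + 2)) (Fin (n + 2)) ℤ := v + F with hv'
  set u' : Matrix (Fin (n + 2)) (Fin (n + 2)) ℤ := gmatZ n (-(d:ℤ)) * (v' * gmatZ n (d:ℤ))
    with hu'
  have hueq : u = gmatZ n (-(d:ℤ)) * (v * gmatZ n (d:ℤ)) := by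
    rw [hv, inv_conjd]
  have hconj : conjd n (d : ℤ) u' = v' := conjd_inv n (d:ℤ) v'
  -- off-support entries of F vanish
  have hFapply : ∀ i j : Fin (n + 2), ¬(j = 0 ∧ i ≠ 0) → F i j = 0 := by
    intro i j h
    rw [hF]
    simp only [single, of_apply, ite_eq_right_iff, and_imp]
    intro h1 h2
    exfalso
    apply h
    refine ⟨h2.symm, fun hi => ?_⟩
    rw [hi] at h1
    exact one_ne_zero h1
  have hmem : memUd n (d : ℤ) u' := by
    intro i j h
    rw [hconj, hv', Matrix.add_apply, hFapply i j h, add_zero]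
    exact hu i j h
  have hv'id : ∀ i j : Fin (n + 2), ¬(j = 0 ∧ i ≠ 0) →
      v' i j = (1 : Matrix (Fin (n + 2)) (Fin (n + 2)) ℤ) i j := by
    intro i j h
    rw [hv', Matrix.add_apply, hFapply i j h, add_zero]; exact hu i j h
  have hv10 : v' 1 0 = v 1 0 + t := by
    rw [hv', Matrix.add_apply, hF]
    simp [single]
  -- determinant of v' is 1
  have hdetv' : v'.det = 1 := by
    have htri : v'.BlockTriangular OrderDual.toDual := by
      intro i j hij
      have hij' : i < j := hij
      have hj : j ≠ 0 := by
        intro h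
        rw [h] at hij'
        exact absurd hij' (by simp)
      rw [hv'id i j (by simp [hj]), Matrix.one_apply_ne (ne_of_lt hij')]
    rw [Matrix.det_of_lowerTriangular v' htri]
    have hdiag : ∀ i : Fin (n+2), v' i i = 1 := by
      intro i
      rw [hv'id i i (by simp), Matrix.one_apply_eq]
    simp [hdiag]
  have hdetu' : u'.det = 1 := by
    have h1 : (gmatZ n (-(d:ℤ))).det * (gmatZ n (d:ℤ)).det = 1 := by
      rw [← Matrix.det_mul, gmatZ_neg_mul, Matrix.det_one]
    rw [hu', Matrix.det_mul, Matrix.det_mul, hdetv']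
    nlinarith [h1]
  refine ⟨u', hmem, ⟨?_, ?_, ?_⟩, ?_⟩
  · rw [hdetu']; norm_num
  · rw [hdetu']; simp [Int.gcd]
  · -- first row mod N
    intro j hj
    have hE2 : u' = v' + (d:ℤ) • (v' * single 0 1 1)
        + (-(d:ℤ)) • ((single 0 1 1 : Matrix (Fin (n+2)) (Fin (n+2)) ℤ) * v')
        + (-(d:ℤ) * d) • ((single 0 1 1 : Matrix (Fin (n+2)) (Fin (n+2)) ℤ)
            * (v' * single 0 1 1)) := by
      rw [hu']
      unfold gmatZ
      simp only [add_mul, mul_add, one_mul, mul_one, Matrix.smul_mul, Matrix.mul_smul]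
      module
    rw [hE2]
    simp only [Matrix.add_apply, Matrix.smul_apply, smul_eq_mul]
    have e1 : v' 0 j = 0 := by
      rw [hv'id 0 j (by simp [hj]), Matrix.one_apply_ne (Ne.symm hj)]
    have e2 : ((single 0 1 1 : Matrix (Fin (n+2)) (Fin (n+2)) ℤ) * v') 0 j
        = v' 1 j := by
      rw [single_mul_apply_same, one_mul]
    have key : (N:ℤ) ∣ (d:ℤ) * ((d:ℤ) * v' 1 0) := by
      have hNdM : (d:ℤ) * (M:ℤ) = (N:ℤ) := by
        exact_mod_cast Nat.mul_div_cancel' hdvd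
      rw [← hNdM, hv10]
      exact mul_dvd_mul_left _ (hMt.mul_left _)
    by_cases hj1 : j = (1 : Fin (n+2))
    · subst hj1
      have e3 : (v' * (single 0 1 1 : Matrix (Fin (n+2)) (Fin (n+2)) ℤ)) 0 1
          = v' 0 0 := by
        rw [mul_single_apply_same, mul_one]
      have e4 : ((single 0 1 1 : Matrix (Fin (n+2)) (Fin (n+2)) ℤ)
          * (v' * (single 0 1 1 : Matrix (Fin (n+2)) (Fin (n+2)) ℤ))) 0 1 = v' 1 0 := by
        rw [single_mul_apply_same, one_mul,
          mul_single_apply_same, mul_one]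
      have e5 : v' 0 0 = 1 := by rw [hv'id 0 0 (by simp), Matrix.one_apply_eq]
      have e6 : v' 1 1 = 1 := by rw [hv'id 1 1 (by simp), Matrix.one_apply_eq]
      rw [e1, e2, e3, e4, e5, e6]
      have heq : (0:ℤ) + (d:ℤ) * 1 + -(d:ℤ) * 1 + -(d:ℤ) * (d:ℤ) * v' 1 0
          = -((d:ℤ) * ((d:ℤ) * v' 1 0)) := by ring
      rw [heq]
      exact dvd_neg.mpr key
    · have e3 : (v' * (single 0 1 1 : Matrix (Fin (n+2)) (Fin (n+2)) ℤ)) 0 j = 0 :=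
        mul_single_apply_of_ne 1 0 1 0 j hj1 v'
      have e4 : ((single 0 1 1 : Matrix (Fin (n+2)) (Fin (n+2)) ℤ)
          * (v' * (single 0 1 1 : Matrix (Fin (n+2)) (Fin (n+2)) ℤ))) 0 j = 0 := by
        rw [single_mul_apply_same, one_mul,
          mul_single_apply_of_ne 1 0 1 1 j hj1]
      have e5 : v' 1 j = 0 := by
        rw [hv'id 1 j (by simp [hj])]
        exact Matrix.one_apply_ne (by simp [Ne.symm hj1])
      rw [e1, e2, e3, e4, e5]
      simp
  · -- congruence mod p
    intro i j
    have hdiff : u' - u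
        = t • (gmatZ n (-(d:ℤ)) * ((single 1 0 1 : Matrix (Fin (n+2)) (Fin (n+2)) ℤ)
            * gmatZ n (d:ℤ))) := by
      rw [hu', hueq, hv']
      have hFt : F = t • (single 1 0 (1:ℤ) : Matrix (Fin (n+2)) (Fin (n+2)) ℤ) := by
        rw [hF]
        ext i j
        simp only [single, of_apply, Matrix.smul_apply, smul_eq_mul]
        split <;> simp
      rw [hFt, add_mul, mul_add, Matrix.smul_mul, Matrix.mul_smul]
      abel
    have h2 : u' i j - u i j
        = t * (gmatZ n (-(d:ℤ)) * ((single 1 0 1 : Matrix (Fin (n+2)) (Fin (n+2)) ℤ)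
            * gmatZ n (d:ℤ))) i j := by
      have h3 : (u' - u) i j = (t • (gmatZ n (-(d:ℤ)) * ((single 1 0 1 : Matrix (Fin (n+2)) (Fin (n+2)) ℤ) * gmatZ n (d:ℤ)))) i j := by
        rw [hdiff]
      simpa [Matrix.sub_apply, Matrix.smul_apply] using h3
    rw [h2]
    exact hpt.mul_right _
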